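/- Let Q be a divisible commutative quantale, b ∈ Q, and let (x_i)_{i ∈ I} be a family of elements with x_i ≤ b for all i, and y ≤ b. Then the smooth slice multiplication distributes over suprema: (⨆_i x_i) ⊗_b y = ⨆_i (x_i ⊗_b y), where x ⊗_b y := b ⊗ (b ⧵ x) ⊗ (b ⧵ y). -/

import Mathlib

/-- Residuation in a quantale: `a ⧵ b = sSup {c | a * c ≤ b}`. -/
def res {Q : Type*} [Mul Q] [CompleteLattice Q] (a b : Q) : Q := sSup {c | a * c ≤ b}

/-- The smooth slice multiplication on `[⊥, b]`: `x ⊗_b y = b * (b ⧵ x) * (b ⧵ y)`. -/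
def smul {Q : Type*} [Mul Q] [CompleteLattice Q] (b x y : Q) : Q := b * res b x * res b y

lemma mul_res_eq {Q : Type*} [CommSemigroup Q] [CompleteLattice Q] [IsQuantale Q]
    (hdiv : ∀ a b : Q, a ≤ b → ∃ c, a = b * c) {a b : Q} (h : a ≤ b) :
    b * res b a = a := by
  apply le_antisymm
  · rw [res, mul_sSup_distrib]
    exact iSup₂_le fun c hc => hc
  · obtain ⟨c, rfl⟩ := hdiv a b h
    rw [res, mul_sSup_distrib]
    exact le_iSup₂_of_le c le_rfl le_rfl

/-- In a divisible commutative quantale, the smooth slice multiplication `⊗_b`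
distributes over suprema of families in `[⊥, b]`. -/
theorem smooth_slice_distrib {Q : Type*} [CommSemigroup Q] [CompleteLattice Q] [IsQuantale Q]
    (hdiv : ∀ a b : Q, a ≤ b → ∃ c, a = b * c)
    {b y : Q} {I : Type*} (x : I → Q) (hx : ∀ i, x i ≤ b) (hy : y ≤ b) :
    smul b (⨆ i, x i) y = ⨆ i, smul b (x i) y := by
  have hsup : (⨆ i, x i) ≤ b := iSup_le hx
  simp only [smul, mul_res_eq hdiv hsup, fun i => mul_res_eq hdiv (hx i)]
  rw [Quantale.iSup_mul_distrib]
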